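/- Let V be a Hilbert space, K : V → V a bounded linear operator with I + K invertible, P the orthogonal projection onto a closed subspace W, and δ > 0. If ‖(I - P) ∘ K ∘ (I + K)⁻¹‖ ≤ 1 - δ, then I + P∘K is invertible and ‖(I + P∘K)⁻¹‖ ≤ δ⁻¹ ‖(I + K)⁻¹‖. -/

import Mathlib

open ContinuousLinearMap

/-- The orthogonal projection of `V` onto the closed subspace `W`, as an operator `V →L[ℂ] V`. -/
noncomputable def galerkinProj {V : Type*} [NormedAddCommGroup V] [InnerProductSpace ℂ V]
    (W : Submodule ℂ V) [CompleteSpace W] : V →L[ℂ] V :=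
  W.subtypeL ∘L W.orthogonalProjectionOnto

theorem sufficient_condition_invertibility_discrete
    {V : Type*} [NormedAddCommGroup V] [InnerProductSpace ℂ V] [CompleteSpace V]
    (K : V →L[ℂ] V) (W : Submodule ℂ V) [CompleteSpace W]
    (J : V →L[ℂ] V) (hJ1 : (1 + K) ∘L J = 1) (hJ2 : J ∘L (1 + K) = 1)
    (δ : ℝ) (hδ : 0 < δ)
    (hyp : ‖((1 : V →L[ℂ] V) - galerkinProj W) ∘L (K ∘L J)‖ ≤ 1 - δ) :
    ∃ Q : V →L[ℂ] V, (1 + galerkinProj W ∘L K) ∘L Q = 1 ∧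
      Q ∘L (1 + galerkinProj W ∘L K) = 1 ∧ ‖Q‖ ≤ δ⁻¹ * ‖J‖ := by
  set P := galerkinProj W
  set E : V →L[ℂ] V := ((1 : V →L[ℂ] V) - P) ∘L (K ∘L J) with hE
  have hEmul : E = (1 - P) * (K * J) := rfl
  have hJ1' : (1 + K) * J = 1 := hJ1
  have hJ2' : J * (1 + K) = 1 := hJ2
  have hElt : ‖E‖ < 1 := lt_of_le_of_lt hyp (by linarith)
  -- the inverse of 1 - E via geometric series
  set S : V →L[ℂ] V := ∑' n : ℕ, E ^ n with hS
  have hS1 : S * (1 - E) = 1 := geom_series_mul_neg E hElt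
  have hS2 : (1 - E) * S = 1 := mul_neg_geom_series E hElt
  have hSnorm : ‖S‖ ≤ δ⁻¹ := by
    have h1 : ‖(1 : V →L[ℂ] V)‖ ≤ 1 := norm_id_le
    have := tsum_geometric_le_of_norm_lt_one E hElt
    have hEnn : (0 : ℝ) ≤ ‖E‖ := norm_nonneg _
    have hinv : (1 - ‖E‖)⁻¹ ≤ δ⁻¹ := by
      apply inv_anti₀ hδ; linarith
    calc ‖S‖ ≤ ‖(1 : V →L[ℂ] V)‖ - 1 + (1 - ‖E‖)⁻¹ := this
      _ ≤ (1 - ‖E‖)⁻¹ := by linarith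
      _ ≤ δ⁻¹ := hinv
  -- key identity: (1 - E) * (1 + K) = 1 + P * K
  have key : (1 - E) * (1 + K) = 1 + P ∘L K := by
    have : E * (1 + K) = (1 - P) * K := by
      rw [hEmul, mul_assoc, mul_assoc, hJ2', mul_one]
    calc (1 - E) * (1 + K) = (1 + K) - E * (1 + K) := by noncomm_ring
      _ = (1 + K) - (1 - P) * K := by rw [this]
      _ = 1 + P ∘L K := by
          have : P ∘L K = P * K := rfl
          rw [this]; noncomm_ring
  refine ⟨J * S, ?_, ?_, ?_⟩
  · show (1 + P ∘L K) * (J * S) = 1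
    rw [← key, mul_assoc, ← mul_assoc (1 + K), hJ1', one_mul, hS2]
  · show (J * S) * (1 + P ∘L K) = 1
    rw [← key, mul_assoc, ← mul_assoc S, hS1, one_mul, hJ2']
  · calc ‖J * S‖ ≤ ‖J‖ * ‖S‖ := norm_mul_le _ _
      _ ≤ ‖J‖ * δ⁻¹ := by
          exact mul_le_mul_of_nonneg_left hSnorm (norm_nonneg _)
      _ = δ⁻¹ * ‖J‖ := mul_comm _ _
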